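/- A countable union of exponentially separable subspaces is exponentially separable: if X is a topological space and X = ⋃ₙ Xₙ where each Xₙ (with the subspace topology) is exponentially separable, then X is exponentially separable. -/

import Mathlib

/-- A space is exponentially separable. -/
def ExpSep (X : Type*) [TopologicalSpace X] : Prop :=
  ∀ F : Set (Set X), F.Countable → (∀ C ∈ F, IsClosed C) →
    ∃ A : Set X, A.Countable ∧ ∀ G ⊆ F, (⋂₀ G).Nonempty → (A ∩ ⋂₀ G).Nonempty

theorem stmt4 (X : Type*) [TopologicalSpace X] (Xn : ℕ → Set X)
    (hcover : (⋃ n, Xn n) = Set.univ)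
    (h : ∀ n, ExpSep (Xn n)) : ExpSep X := by
  intro F hFc hFcl
  have key : ∀ n, ∃ A : Set (Xn n), A.Countable ∧
      ∀ G ⊆ ((fun C : Set X => (Subtype.val ⁻¹' C : Set (Xn n))) '' F),
        (⋂₀ G).Nonempty → (A ∩ ⋂₀ G).Nonempty := fun n =>
    h n _ (hFc.image _)
      (by rintro C ⟨D, hD, rfl⟩; exact (hFcl D hD).preimage continuous_subtype_val)
  choose A hAc hA using key
  refine ⟨⋃ n, Subtype.val '' A n, Set.countable_iUnion fun n => (hAc n).image _, ?_⟩
  rintro G hG ⟨x, hx⟩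
  obtain ⟨n, hxn⟩ : ∃ n, x ∈ Xn n := by
    have : x ∈ ⋃ n, Xn n := hcover ▸ Set.mem_univ x
    simpa using this
  set Gn : Set (Set (Xn n)) := (fun C : Set X => (Subtype.val ⁻¹' C : Set (Xn n))) '' G with hGndef
  have hGn : Gn ⊆ (fun C : Set X => (Subtype.val ⁻¹' C : Set (Xn n))) '' F :=
    Set.image_mono hG
  have hint : ⋂₀ Gn = Subtype.val ⁻¹' ⋂₀ G := by
    ext y
    simp [hGndef, Set.mem_sInter]
  have hne : (⋂₀ Gn).Nonempty := ⟨⟨x, hxn⟩, by rw [hint]; exact hx⟩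
  obtain ⟨a, haA, haG⟩ := hA n Gn hGn hne
  refine ⟨a, Set.mem_iUnion.2 ⟨n, Set.mem_image_of_mem _ haA⟩, ?_⟩
  rw [hint] at haG
  exact haG
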